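/- The function V̂₂ satisfies the Hamilton–Jacobi–Bellman equation of the problem with control set A = [−1,1]: for every x in (−1,1) with x ≠ 0, the supremum over a ∈ [−1,1] of (a²/2)·V̂₂''(x) − (4a + 9/2)·V̂₂(x) minus f(x) equals 0, with the supremum attained at a = sgn(x); moreover the boundary conditions V̂₂(1) = −sinh(2) and V̂₂(−1) = 2·sinh(1) hold. In particular, a Markov policy of the form π(x) = sgn(x) attains the HJB supremum even though the control set is the uncountable interval [−1,1]. -/

import Mathlib

/-- The candidate value function of the infinite-horizon control problem with
control set `A = [-1, 1]`. -/
noncomputable def Vhat2 (x : ℝ) : ℝ :=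
  if 0 ≤ x then -Real.sinh (2 * x) else -2 * Real.sinh x

/-- The running cost `f(x) = (13/2) sinh(2 max{x,0})`. -/
noncomputable def runningCost (x : ℝ) : ℝ := 13 / 2 * Real.sinh (2 * max x 0)

lemma sinh2_hasDeriv (y : ℝ) :
    HasDerivAt (fun y : ℝ => -Real.sinh (2 * y)) (-(2 * Real.cosh (2 * y))) y := by
  have h := ((Real.hasDerivAt_sinh (2 * y)).comp y ((hasDerivAt_id y).const_mul 2)).neg
  exact h.congr_deriv (by ring)

lemma cosh2_hasDeriv (y : ℝ) :
    HasDerivAt (fun y : ℝ => -(2 * Real.cosh (2 * y))) (-(4 * Real.sinh (2 * y))) y := by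
  have h := (((Real.hasDerivAt_cosh (2 * y)).comp y
    ((hasDerivAt_id y).const_mul 2)).const_mul 2).neg
  exact h.congr_deriv (by ring)

lemma sinh_hasDeriv (y : ℝ) :
    HasDerivAt (fun y : ℝ => -2 * Real.sinh y) (-2 * Real.cosh y) y := by
  simpa using (Real.hasDerivAt_sinh y).const_mul (-2 : ℝ)

lemma cosh_hasDeriv (y : ℝ) :
    HasDerivAt (fun y : ℝ => -2 * Real.cosh y) (-2 * Real.sinh y) y := by
  simpa using (Real.hasDerivAt_cosh y).const_mul (-2 : ℝ)

lemma deriv2_pos {x : ℝ} (hx : 0 < x) :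
    deriv (deriv Vhat2) x = -(4 * Real.sinh (2 * x)) := by
  have hev : Vhat2 =ᶠ[nhds x] (fun y : ℝ => -Real.sinh (2 * y)) := by
    filter_upwards [Ioi_mem_nhds hx] with y hy
    simp [Vhat2, le_of_lt (Set.mem_Ioi.mp hy)]
  have h1 : deriv (fun y : ℝ => -Real.sinh (2 * y))
      = fun y : ℝ => -(2 * Real.cosh (2 * y)) := by
    funext y; exact (sinh2_hasDeriv y).deriv
  calc deriv (deriv Vhat2) x = deriv (deriv (fun y : ℝ => -Real.sinh (2 * y))) x :=
        hev.deriv.deriv_eq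
    _ = deriv (fun y : ℝ => -(2 * Real.cosh (2 * y))) x := by rw [h1]
    _ = -(4 * Real.sinh (2 * x)) := (cosh2_hasDeriv x).deriv

lemma deriv2_neg {x : ℝ} (hx : x < 0) :
    deriv (deriv Vhat2) x = -2 * Real.sinh x := by
  have hev : Vhat2 =ᶠ[nhds x] (fun y : ℝ => -2 * Real.sinh y) := by
    filter_upwards [Iio_mem_nhds hx] with y hy
    simp [Vhat2, not_le.mpr (Set.mem_Iio.mp hy)]
  have h1 : deriv (fun y : ℝ => -2 * Real.sinh y)
      = fun y : ℝ => -2 * Real.cosh y := by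
    funext y; exact (sinh_hasDeriv y).deriv
  calc deriv (deriv Vhat2) x = deriv (deriv (fun y : ℝ => -2 * Real.sinh y)) x :=
        hev.deriv.deriv_eq
    _ = deriv (fun y : ℝ => -2 * Real.cosh y) x := by rw [h1]
    _ = -2 * Real.sinh x := (cosh_hasDeriv x).deriv

/-- `V̂₂` satisfies the HJB equation with control set `A = [-1,1]`: for every
`x ∈ Set.Ioo (-1,1) \ {0}`, the supremum over `a ∈ [-1,1]` of
`(a²/2) V̂₂''(x) - (4a + 9/2) V̂₂(x)` minus `f(x)` equals `0`, with the supremum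
attained at `a = sgn x`; moreover the boundary conditions hold. -/
theorem Vhat2_HJB :
    (∀ x ∈ Set.Ioo (-1 : ℝ) 1, x ≠ 0 →
      IsGreatest
        ((fun a : ℝ => a ^ 2 / 2 * deriv (deriv Vhat2) x - (4 * a + 9 / 2) * Vhat2 x) ''
          Set.Icc (-1 : ℝ) 1) (runningCost x) ∧
      (Real.sign x) ^ 2 / 2 * deriv (deriv Vhat2) x - (4 * Real.sign x + 9 / 2) * Vhat2 x
        = runningCost x) ∧
    Vhat2 1 = -Real.sinh 2 ∧
    Vhat2 (-1) = 2 * Real.sinh 1 := by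
  refine ⟨?_, ?_, ?_⟩
  · intro x hx hx0
    rcases lt_or_gt_of_ne hx0 with hneg | hpos
    · -- x < 0
      have hd : deriv (deriv Vhat2) x = -2 * Real.sinh x := deriv2_neg hneg
      have hV : Vhat2 x = -2 * Real.sinh x := by simp [Vhat2, not_le.mpr hneg]
      have hf : runningCost x = 0 := by
        simp [runningCost, max_eq_right (le_of_lt hneg)]
      have hs : Real.sinh x < 0 := Real.sinh_neg_iff.mpr hneg
      have hattain : (fun a : ℝ => a ^ 2 / 2 * deriv (deriv Vhat2) x
          - (4 * a + 9 / 2) * Vhat2 x) (-1) = runningCost x := by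
        rw [hd, hV, hf]; ring
      constructor
      · refine ⟨⟨-1, by norm_num, hattain⟩, ?_⟩
        rintro v ⟨a, ⟨ha1, ha2⟩, rfl⟩
        simp only [hd, hV, hf]
        nlinarith [sq_nonneg (a + 1), mul_nonneg (sub_nonneg.mpr ha1) (neg_nonneg.mpr hs.le)]
      · rw [Real.sign_of_neg hneg]
        simpa using hattain
    · -- x > 0
      have hd : deriv (deriv Vhat2) x = -(4 * Real.sinh (2 * x)) := deriv2_pos hpos
      have hV : Vhat2 x = -Real.sinh (2 * x) := by simp [Vhat2, le_of_lt hpos]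
      have hf : runningCost x = 13 / 2 * Real.sinh (2 * x) := by
        simp [runningCost, max_eq_left (le_of_lt hpos)]
      have hs : 0 < Real.sinh (2 * x) := Real.sinh_pos_iff.mpr (by linarith)
      have hattain : (fun a : ℝ => a ^ 2 / 2 * deriv (deriv Vhat2) x
          - (4 * a + 9 / 2) * Vhat2 x) 1 = runningCost x := by
        rw [hd, hV, hf]; ring
      constructor
      · refine ⟨⟨1, by norm_num, hattain⟩, ?_⟩
        rintro v ⟨a, ⟨ha1, ha2⟩, rfl⟩
        simp only [hd, hV, hf]
        nlinarith [sq_nonneg (a - 1), hs.le]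
      · rw [Real.sign_of_pos hpos]
        simpa using hattain
  · norm_num [Vhat2]
  · norm_num [Vhat2, Real.sinh_neg]
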